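/- For real s > 1 and β, α > -1, the Laplace transform of the Volterra function satisfies ∫₀^∞ e^(-st) μ(t,β,α) dt = 1 / (s^(α+1) (log s)^(β+1)). -/

import Mathlib

open MeasureTheory Set

/-- Scaled Gamma integral value. -/
lemma volterra_aux_integral {q b : ℝ} (hq : -1 < q) (hb : 0 < b) :
    ∫ x in Ioi (0 : ℝ), x ^ q * Real.exp (-b * x) =
      b ^ (-(q + 1)) * Real.Gamma (q + 1) := by
  have := integral_rpow_mul_exp_neg_mul_rpow (p := 1) one_pos hq hb
  simpa [Real.rpow_one, div_one] using this

/-- Scaled Gamma integral integrability. -/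
lemma volterra_aux_integrable {q b : ℝ} (hq : -1 < q) (hb : 0 < b) :
    IntegrableOn (fun x : ℝ => x ^ q * Real.exp (-b * x)) (Ioi 0) := by
  simpa [Real.rpow_one] using integrableOn_rpow_mul_exp_neg_mul_rpow hq one_pos hb

/-- For real `s > 1` and `β, α > -1`, the Laplace transform of the
Volterra function `μ(t,β,α) = (1/Γ(β+1)) ∫₀^∞ t^(u+α) u^β / Γ(u+α+1) du`
satisfies `∫₀^∞ e^(-st) μ(t,β,α) dt = 1 / (s^(α+1) (log s)^(β+1))`. -/
theorem volterra_laplace_transform (s β α : ℝ) (hs : 1 < s)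
    (hβ : -1 < β) (hα : -1 < α) :
    ∫ t in Ioi (0 : ℝ), Real.exp (-s * t) *
        ((1 / Real.Gamma (β + 1)) *
          ∫ u in Ioi (0 : ℝ), t ^ (u + α) * u ^ β / Real.Gamma (u + α + 1)) =
      1 / (s ^ (α + 1) * Real.log s ^ (β + 1)) := by
  have hs0 : (0 : ℝ) < s := lt_trans one_pos hs
  have hlog : 0 < Real.log s := Real.log_pos hs
  set f : ℝ → ℝ → ℝ := fun t u =>
    Real.exp (-s * t) * (t ^ (u + α) * u ^ β / Real.Gamma (u + α + 1)) with hf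
  have hΓu : ∀ u : ℝ, u ∈ Ioi (0 : ℝ) → 0 < Real.Gamma (u + α + 1) := fun u hu =>
    Real.Gamma_pos_of_pos (by simp only [mem_Ioi] at hu; linarith)
  -- value of the inner (in `t`) integral
  have hinner : ∀ u ∈ Ioi (0 : ℝ),
      (∫ t in Ioi (0 : ℝ), f t u) =
        u ^ β * Real.exp (-Real.log s * u) * s ^ (-(α + 1)) := by
    intro u hu
    have hu0 : (0 : ℝ) < u := hu
    have hq : -1 < u + α := by linarith
    have h1 : (∫ t in Ioi (0 : ℝ), f t u) =
        (u ^ β / Real.Gamma (u + α + 1)) *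
          ∫ t in Ioi (0 : ℝ), t ^ (u + α) * Real.exp (-s * t) := by
      rw [← integral_const_mul]
      refine setIntegral_congr_fun measurableSet_Ioi fun t ht => ?_
      simp only [hf]; ring
    rw [h1, volterra_aux_integral hq hs0]
    have hne : Real.Gamma (u + α + 1) ≠ 0 := (hΓu u hu).ne'
    have h2 : s ^ (-(u + α + 1)) = Real.exp (-Real.log s * u) * s ^ (-(α + 1)) := by
      rw [show -(u + α + 1) = -u + -(α + 1) by ring, Real.rpow_add hs0,
        Real.rpow_def_of_pos hs0]
      ring_nf
    have h3 : u + α + 1 = u + α + 1 := rfl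
    calc u ^ β / Real.Gamma (u + α + 1) *
          (s ^ (-(u + α + 1)) * Real.Gamma (u + α + 1))
        = u ^ β * s ^ (-(u + α + 1)) := by field_simp
      _ = u ^ β * Real.exp (-Real.log s * u) * s ^ (-(α + 1)) := by rw [h2]; ring
  -- joint measurability via continuity on the open quadrant
  have hcont : ContinuousOn (fun p : ℝ × ℝ => f p.1 p.2) (Ioi 0 ×ˢ Ioi 0) := by
    intro p hp
    obtain ⟨ht, hu⟩ : p.1 ∈ Ioi (0 : ℝ) ∧ p.2 ∈ Ioi (0 : ℝ) := hp
    apply ContinuousAt.continuousWithinAt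
    have h1 : ContinuousAt (fun p : ℝ × ℝ => Real.exp (-s * p.1)) p :=
      (Real.continuous_exp.comp (continuous_const.mul continuous_fst)).continuousAt
    have h2 : ContinuousAt (fun p : ℝ × ℝ => p.1 ^ (p.2 + α)) p :=
      ContinuousAt.rpow continuousAt_fst (continuousAt_snd.add continuousAt_const)
        (Or.inl (ne_of_gt ht))
    have h3 : ContinuousAt (fun p : ℝ × ℝ => p.2 ^ β) p :=
      ContinuousAt.rpow_const continuousAt_snd (Or.inl (ne_of_gt hu))
    have h4 : ContinuousAt (fun p : ℝ × ℝ => Real.Gamma (p.2 + α + 1)) p := by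
      have hG : ContinuousAt Real.Gamma (p.2 + α + 1) := by
        refine (Real.differentiableAt_Gamma fun m => ?_).continuousAt
        have : (0 : ℝ) < p.2 + α + 1 := by
          have := mem_Ioi.mp hu; linarith
        have hm : (-(m : ℝ)) ≤ 0 := neg_nonpos.mpr (Nat.cast_nonneg m)
        linarith
      have hc : ContinuousAt (fun p : ℝ × ℝ => p.2 + α + 1) p :=
        (continuousAt_snd.add continuousAt_const).add continuousAt_const
      exact ContinuousAt.comp (g := Real.Gamma) (f := fun p : ℝ × ℝ => p.2 + α + 1) hG hc
    exact h1.mul ((h2.mul h3).div h4 (hΓu p.2 hu).ne')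
  have hmeas : AEStronglyMeasurable (fun p : ℝ × ℝ => f p.1 p.2)
      ((volume.restrict (Ioi 0)).prod (volume.restrict (Ioi 0))) := by
    rw [Measure.prod_restrict]
    exact hcont.aestronglyMeasurable (measurableSet_Ioi.prod measurableSet_Ioi)
  -- integrability on the product
  have hint : Integrable (fun p : ℝ × ℝ => f p.1 p.2)
      ((volume.restrict (Ioi 0)).prod (volume.restrict (Ioi 0))) := by
    rw [integrable_prod_iff' hmeas]
    constructor
    · filter_upwards [ae_restrict_mem measurableSet_Ioi] with u hu
      have hu0 : (0 : ℝ) < u := hu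
      have hq : -1 < u + α := by linarith
      have : IntegrableOn
          (fun t : ℝ => (u ^ β / Real.Gamma (u + α + 1)) *
            (t ^ (u + α) * Real.exp (-s * t))) (Ioi 0) :=
        (volterra_aux_integrable hq hs0).const_mul _
      refine this.congr_fun (fun t ht => ?_) measurableSet_Ioi
      simp only [hf]; ring
    · have key : IntegrableOn
          (fun u : ℝ => u ^ β * Real.exp (-Real.log s * u) * s ^ (-(α + 1)))
          (Ioi 0) := (volterra_aux_integrable hβ hlog).mul_const _
      refine key.congr ?_
      filter_upwards [ae_restrict_mem measurableSet_Ioi] with u hu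
      have hu0 : (0 : ℝ) < u := hu
      have hnn : ∀ t ∈ Ioi (0 : ℝ), 0 ≤ f t u := by
        intro t ht
        have hΓ := (hΓu u hu).le
        have ht0 : (0 : ℝ) < t := ht
        simp only [hf]
        positivity
      have hnorm : (∫ t in Ioi (0 : ℝ), ‖f t u‖) = ∫ t in Ioi (0 : ℝ), f t u := by
        refine setIntegral_congr_fun measurableSet_Ioi fun t ht => ?_
        exact Real.norm_of_nonneg (hnn t ht)
      rw [hnorm, hinner u hu]
  -- swap the integrals
  have hswap : (∫ t in Ioi (0 : ℝ), ∫ u in Ioi (0 : ℝ), f t u) =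
      ∫ u in Ioi (0 : ℝ), ∫ t in Ioi (0 : ℝ), f t u :=
    integral_integral_swap hint
  -- compute the `u` integral
  have houter : (∫ u in Ioi (0 : ℝ), ∫ t in Ioi (0 : ℝ), f t u) =
      (Real.log s ^ (-(β + 1)) * Real.Gamma (β + 1)) * s ^ (-(α + 1)) := by
    rw [setIntegral_congr_fun measurableSet_Ioi hinner]
    rw [show (fun u : ℝ => u ^ β * Real.exp (-Real.log s * u) * s ^ (-(α + 1))) =
      (fun u : ℝ => u ^ β * Real.exp (-Real.log s * u) * s ^ (-(α + 1))) from rfl]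
    rw [integral_mul_const, volterra_aux_integral hβ hlog]
  -- reduce the statement to the iterated integral of `f`
  have hΓβ : Real.Gamma (β + 1) ≠ 0 :=
    (Real.Gamma_pos_of_pos (by linarith)).ne'
  have hlhs : (∫ t in Ioi (0 : ℝ), Real.exp (-s * t) *
        ((1 / Real.Gamma (β + 1)) *
          ∫ u in Ioi (0 : ℝ), t ^ (u + α) * u ^ β / Real.Gamma (u + α + 1))) =
      (1 / Real.Gamma (β + 1)) * ∫ t in Ioi (0 : ℝ), ∫ u in Ioi (0 : ℝ), f t u := by
    rw [← integral_const_mul]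
    refine setIntegral_congr_fun measurableSet_Ioi fun t ht => ?_
    have e1 : (∫ u in Ioi (0 : ℝ), f t u) = Real.exp (-s * t) *
        ∫ u in Ioi (0 : ℝ), t ^ (u + α) * u ^ β / Real.Gamma (u + α + 1) :=
      integral_const_mul _ _
    rw [e1]
    ring
  rw [hlhs, hswap, houter]
  have h5 : s ^ (-(α + 1)) = (s ^ (α + 1))⁻¹ := Real.rpow_neg hs0.le _
  have h6 : Real.log s ^ (-(β + 1)) = (Real.log s ^ (β + 1))⁻¹ :=
    Real.rpow_neg hlog.le _
  rw [h5, h6]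
  field_simp
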